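/- Let Γ ≅ (ℤ/2ℤ) × (ℤ/2ℤ) with generators σ, τ, and let M = (ℤ/4ℤ)³ with Γ-action σ(a,b,c) = (b, a, −a−b−c) and τ(a,b,c) = (c, −a−b−c, a). Then H¹(Γ, M) ≅ ℤ/4ℤ. -/

import Mathlib

open CategoryTheory CategoryTheory.Limits groupCohomology

/-- A permutation `ℤΓ`-module: one isomorphic to `ℤ[X]` for some `Γ`-set `X`. -/
def IsPermutationModule {Γ : Type} [Group Γ] (F : Rep ℤ Γ) : Prop :=
  ∃ (X : Type) (_ : MulAction Γ X), Nonempty (F ≅ Rep.ofMulAction ℤ Γ X)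

/-- A permutation projective module: a direct summand of a permutation module. -/
def IsPermutationProjective {Γ : Type} [Group Γ] (M : Rep ℤ Γ) : Prop :=
  ∃ F : Rep ℤ Γ, IsPermutationModule F ∧ ∃ (i : M ⟶ F) (r : F ⟶ M), i ≫ r = 𝟙 M

/-- A coflasque module: `ℤ`-free with vanishing `H¹(Γ', M)` for all subgroups `Γ' ≤ Γ`. -/
def IsCoflasque {Γ : Type} [Group Γ] (M : Rep.{0} ℤ Γ) : Prop :=
  (@Module.Free ℤ M.V _ _ M.hV2) ∧
    ∀ Γ' : Subgroup Γ,
      Subsingleton (H1 ((Rep.resFunctor Γ'.subtype).obj M))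

/-- A permutation presentation of `M`: an exact sequence `0 → F → F → M → 0`
with `F` a permutation module. -/
def HasPermutationPresentation {Γ : Type} [Group Γ] (M : Rep ℤ Γ) : Prop :=
  ∃ (F : Rep ℤ Γ) (_ : IsPermutationModule F) (f : F ⟶ F) (π : F ⟶ M),
    Function.Injective f.hom ∧ Function.Surjective π.hom ∧ Function.Exact f.hom π.hom

/-- `π` is `H⁰`-surjective if it is surjective on `Γ'`-invariants for every subgroup `Γ'`. -/
def IsH0Surjective {Γ : Type} [Group Γ] {M N : Rep.{0} ℤ Γ} (π : M ⟶ N) : Prop :=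
  ∀ Γ' : Subgroup Γ, ∀ n : N, (∀ γ : Γ', N.ρ ↑γ n = n) →
    ∃ m : M, (∀ γ : Γ', M.ρ ↑γ m = m) ∧ π.hom m = n

namespace H1KleinAux

abbrev G4 := Multiplicative (ZMod 2) × Multiplicative (ZMod 2)
abbrev M4 := ZMod 4 × ZMod 4 × ZMod 4

def σ₀ : G4 := (Multiplicative.ofAdd 1, 1)
def τ₀ : G4 := (1, Multiplicative.ofAdd 1)

lemma enum : ∀ g : G4, g = 1 ∨ g = σ₀ ∨ g = τ₀ ∨ g = σ₀ * τ₀ := by decide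

def f0 : G4 → M4 := fun g =>
  if g = σ₀ then (1, 3, 0) else if g = τ₀ then (1, 0, 3)
  else if g = σ₀ * τ₀ then (1, 0, 0) else 0

lemma pσσ : σ₀ * σ₀ = 1 := by decide
lemma pττ : τ₀ * τ₀ = 1 := by decide
lemma pτσ : τ₀ * σ₀ = σ₀ * τ₀ := by decide
lemma pσστ : σ₀ * (σ₀ * τ₀) = τ₀ := by decide
lemma pτστ : τ₀ * (σ₀ * τ₀) = σ₀ := by decide
lemma pστσ : (σ₀ * τ₀) * σ₀ = τ₀ := by decide
lemma pσττ : (σ₀ * τ₀) * τ₀ = σ₀ := by decide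
lemma pστστ : (σ₀ * τ₀) * (σ₀ * τ₀) = 1 := by decide

lemma f0σ : f0 σ₀ = (1, 3, 0) := by decide
lemma f0τ : f0 τ₀ = (1, 0, 3) := by decide
lemma f0στ : f0 (σ₀ * τ₀) = (1, 0, 0) := by decide
lemma f0one : f0 1 = 0 := by decide

variable (ρ : Representation ℤ G4 M4)
variable (hσ : ∀ a b c : ZMod 4, ρ σ₀ (a, b, c) = (b, a, -a - b - c))
variable (hτ : ∀ a b c : ZMod 4, ρ τ₀ (a, b, c) = (c, -a - b - c, a))

include hσ in
lemma rσ (v : M4) : ρ σ₀ v = (v.2.1, v.1, -v.1 - v.2.1 - v.2.2) := hσ v.1 v.2.1 v.2.2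

include hτ in
lemma rτ (v : M4) : ρ τ₀ v = (v.2.2, -v.1 - v.2.1 - v.2.2, v.1) := hτ v.1 v.2.1 v.2.2

include hσ hτ in
lemma rστ (v : M4) : ρ (σ₀ * τ₀) v = (-v.1 - v.2.1 - v.2.2, v.2.2, v.2.1) := by
  rw [map_mul]
  show ρ σ₀ (ρ τ₀ v) = _
  rw [rτ ρ hτ, rσ ρ hσ]
  exact Prod.ext (by ring) (Prod.ext (by ring) (by ring))

include hσ hτ in
lemma f0_mem : f0 ∈ cocycles₁ (Rep.of ρ) := by
  rw [mem_cocycles₁_iff]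
  intro g h
  show f0 (g * h) = ρ g (f0 h) + f0 g
  rcases enum g with rfl | rfl | rfl | rfl <;> rcases enum h with rfl | rfl | rfl | rfl <;>
    simp only [one_mul, mul_one, pσσ, pττ, pτσ, pσστ, pτστ, pστσ, pσττ, pστστ,
      Rep.of_ρ, map_one, Module.End.one_apply, f0σ, f0τ, f0στ, f0one,
      rσ ρ hσ, rτ ρ hτ, rστ ρ hσ hτ] <;> decide

/-- The functional `f ↦ 2 f(σ)₁ + f(τ)₁ + f(τ)₂` on functions. -/
def ev : (G4 → M4) →ₗ[ℤ] ZMod 4 where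
  toFun f := 2 * (f σ₀).1 + (f τ₀).1 + (f τ₀).2.1
  map_add' f g := by
    simp only [Pi.add_apply, Prod.fst_add, Prod.snd_add]
    ring
  map_smul' n f := by
    simp only [Pi.smul_apply, Prod.smul_fst, Prod.smul_snd, zsmul_eq_mul, Prod.fst_mul, Prod.snd_mul, Prod.fst_intCast, Prod.snd_intCast,
      RingHom.id_apply]
    ring

/-- The functional on 1-cocycles. -/
noncomputable def φ : cocycles₁ (Rep.of ρ) →ₗ[ℤ] ZMod 4 :=
  ev.comp (cocycles₁ (Rep.of ρ)).subtype

include hσ hτ in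
lemma bound_le_ker : (coboundaries₁ (Rep.of ρ)).comap (cocycles₁ (Rep.of ρ)).subtype ≤ LinearMap.ker (φ ρ) := by
  intro f hf
  rcases hf with ⟨m, hm⟩
  set F : G4 → M4 := f.1 with hF
  set m' : M4 := m with hm'
  have hmσ : ρ σ₀ m' - m' = F σ₀ := congrFun hm σ₀
  have hmτ : ρ τ₀ m' - m' = F τ₀ := congrFun hm τ₀
  rw [LinearMap.mem_ker]
  show 2 * (F σ₀).1 + (F τ₀).1 + (F τ₀).2.1 = 0
  rw [← hmσ, ← hmτ, rσ ρ hσ, rτ ρ hτ]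
  have h4 : (4 : ZMod 4) = 0 := by decide
  simp only [Prod.fst_sub, Prod.snd_sub]
  linear_combination (-(m' : M4).1) * h4

include hσ hτ in
lemma ker_le_bound : LinearMap.ker (φ ρ) ≤ (coboundaries₁ (Rep.of ρ)).comap (cocycles₁ (Rep.of ρ)).subtype := by
  intro f hf
  set F : G4 → M4 := f.1 with hF
  have hc : ∀ g h : G4, F (g * h) = ρ g (F h) + F g := (mem_cocycles₁_iff f.1).1 f.2
  have h0 : F 1 = (0 : M4) := cocycles₁_map_one f
  set x : M4 := F σ₀ with hxdef
  set y : M4 := F τ₀ with hydef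
  have e1 : (0 : M4) = ρ σ₀ x + x := by rw [hxdef, ← h0, ← pσσ]; exact hc σ₀ σ₀
  have e2 : (0 : M4) = ρ τ₀ y + y := by rw [hydef, ← h0, ← pττ]; exact hc τ₀ τ₀
  have e3 : ρ σ₀ y + x = ρ τ₀ x + y := by
    rw [hxdef, hydef, ← hc σ₀ τ₀, ← hc τ₀ σ₀, pτσ]
  have hφ : 2 * x.1 + y.1 + y.2.1 = 0 := hf
  rw [rσ ρ hσ] at e1 e3
  rw [rτ ρ hτ] at e2 e3
  have e11 : (0 : ZMod 4) = x.2.1 + x.1 := congrArg Prod.fst e1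
  have e21 : (0 : ZMod 4) = y.2.2 + y.1 := congrArg Prod.fst e2
  have e31 : y.2.1 + x.1 = x.2.2 + y.1 := congrArg Prod.fst e3
  show F ∈ coboundaries₁ (Rep.of ρ)
  refine ⟨((0, x.1, y.1) : M4), ?_⟩
  funext g
  rcases enum g with rfl | rfl | rfl | rfl
  · show ρ (1 : G4) ((0, x.1, y.1) : M4) - ((0, x.1, y.1) : M4) = F 1
    rw [map_one, h0]
    simp
  · show ρ σ₀ ((0, x.1, y.1) : M4) - ((0, x.1, y.1) : M4) = F σ₀
    rw [rσ ρ hσ, ← hxdef]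
    simp only [Prod.ext_iff, Prod.fst_sub, Prod.snd_sub, Prod.fst_add, Prod.snd_add]
    refine ⟨by ring, by linear_combination e11, by linear_combination e31 - hφ⟩
  · show ρ τ₀ ((0, x.1, y.1) : M4) - ((0, x.1, y.1) : M4) = F τ₀
    rw [rτ ρ hτ, ← hydef]
    simp only [Prod.ext_iff, Prod.fst_sub, Prod.snd_sub, Prod.fst_add, Prod.snd_add]
    refine ⟨by ring, by linear_combination -hφ, by linear_combination e21⟩
  · show ρ (σ₀ * τ₀) ((0, x.1, y.1) : M4) - ((0, x.1, y.1) : M4) = F (σ₀ * τ₀)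
    rw [rστ ρ hσ hτ, hc σ₀ τ₀, ← hxdef, ← hydef, rσ ρ hσ]
    simp only [Prod.ext_iff, Prod.fst_sub, Prod.snd_sub, Prod.fst_add, Prod.snd_add]
    refine ⟨by linear_combination -hφ, by linear_combination e11,
      by linear_combination e31 - e21⟩

include hσ hτ in
lemma φ_surj : Function.Surjective (φ ρ) := by
  have hmem := f0_mem ρ hσ hτ
  have h3 : φ ρ ⟨f0, hmem⟩ = 3 := by
    show ev f0 = 3
    show 2 * (f0 σ₀).1 + (f0 τ₀).1 + (f0 τ₀).2.1 = 3
    decide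
  intro z
  rcases (by decide : ∀ w : ZMod 4, w = 0 ∨ w = 1 ∨ w = 2 ∨ w = 3) z with rfl | rfl | rfl | rfl
  · exact ⟨0, map_zero _⟩
  · refine ⟨(3 : ℤ) • ⟨f0, hmem⟩, ?_⟩
    rw [map_smul, h3, zsmul_eq_mul]; decide
  · refine ⟨(2 : ℤ) • ⟨f0, hmem⟩, ?_⟩
    rw [map_smul, h3, zsmul_eq_mul]; decide
  · exact ⟨⟨f0, hmem⟩, h3⟩

end H1KleinAux

open H1KleinAux in
theorem H1KleinAux.main
    (ρ : Representation ℤ (Multiplicative (ZMod 2) × Multiplicative (ZMod 2))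
      (ZMod 4 × ZMod 4 × ZMod 4))
    (hσ : ∀ a b c : ZMod 4,
      ρ (Multiplicative.ofAdd 1, 1) (a, b, c) = (b, a, -a - b - c))
    (hτ : ∀ a b c : ZMod 4,
      ρ (1, Multiplicative.ofAdd 1) (a, b, c) = (c, -a - b - c, a)) :
    Nonempty (H1 (Rep.of ρ) ≃+ ZMod 4) := by
  have hle := bound_le_ker ρ hσ hτ
  have hge := ker_le_bound ρ hσ hτ
  have hsurj : Function.Surjective (H1π (Rep.of ρ)).hom :=
    (ModuleCat.epi_iff_surjective _).1 inferInstance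
  have hker : LinearMap.ker (H1π (Rep.of ρ)).hom = LinearMap.ker (φ ρ) := by
    ext f
    exact (H1π_eq_zero_iff f).trans ⟨fun h => hle h, fun h => hge h⟩
  exact ⟨((LinearMap.quotKerEquivOfSurjective _ hsurj).symm.trans
    ((Submodule.quotEquivOfEq _ _ hker).trans
      (LinearMap.quotKerEquivOfSurjective _ (φ_surj ρ hσ hτ)))).toAddEquiv⟩

theorem h1_klein_four_on_zmod4_cubed
    (ρ : Representation ℤ (Multiplicative (ZMod 2) × Multiplicative (ZMod 2))
      (ZMod 4 × ZMod 4 × ZMod 4))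
    (hσ : ∀ a b c : ZMod 4,
      ρ (Multiplicative.ofAdd 1, 1) (a, b, c) = (b, a, -a - b - c))
    (hτ : ∀ a b c : ZMod 4,
      ρ (1, Multiplicative.ofAdd 1) (a, b, c) = (c, -a - b - c, a)) :
    Nonempty (H1 (Rep.of ρ) ≃+ ZMod 4) :=
  H1KleinAux.main ρ hσ hτ
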